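/- arXiv:1304.3074 — 3 statements merged into one kernel-verified Lean document; each statement's English description precedes it below -/
import Mathlib

section
/- For x ≥ (μ²+σ²)/(2μ) with μ,σ > 0, the supremum of E_Q[|x − D|] over all probability measures Q on ℝ₊ with mean μ and second moment μ²+σ² equals √((x−μ)² + σ²), attained by a two-point measure supported at x − √((x−μ)²+σ²) and x + √((x−μ)²+σ²). -/
open MeasureTheory Set

/-- A two-point probability measure with mass p at d₁ and mass 1-p at d₂. -/
noncomputable def twoPoint (p d₁ d₂ : ℝ) : MeasureTheory.Measure ℝ :=
  ENNReal.ofReal p • MeasureTheory.Measure.dirac d₁ +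
    ENNReal.ofReal (1 - p) • MeasureTheory.Measure.dirac d₂

lemma integrable_dirac' (f : ℝ → ℝ) (hf : Measurable f) (a : ℝ) :
    Integrable f (MeasureTheory.Measure.dirac a) :=
  ⟨hf.aestronglyMeasurable, by
    simp [HasFiniteIntegral, MeasureTheory.lintegral_dirac]⟩

lemma integrable_twoPoint (p d₁ d₂ : ℝ) (f : ℝ → ℝ) (hf : Measurable f) :
    Integrable f (twoPoint p d₁ d₂) := by
  unfold twoPoint
  refine Integrable.add_measure ?_ ?_ <;>
    exact (integrable_dirac' f hf _).smul_measure ENNReal.ofReal_ne_top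

lemma integral_twoPoint (p d₁ d₂ : ℝ) (hp0 : 0 ≤ p) (hp1 : p ≤ 1)
    (f : ℝ → ℝ) (hf : Measurable f) :
    ∫ t, f t ∂(twoPoint p d₁ d₂) = p * f d₁ + (1 - p) * f d₂ := by
  unfold twoPoint
  rw [integral_add_measure
      ((integrable_dirac' f hf _).smul_measure ENNReal.ofReal_ne_top)
      ((integrable_dirac' f hf _).smul_measure ENNReal.ofReal_ne_top),
    integral_smul_measure, integral_smul_measure, integral_dirac, integral_dirac,
    ENNReal.toReal_ofReal hp0, ENNReal.toReal_ofReal (by linarith)]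
  simp [smul_eq_mul]

/-- For x ≥ (μ²+σ²)/(2μ), the worst-case expectation of |x−D| over probability
measures on ℝ₊ with mean μ and second moment μ²+σ² equals √((x−μ)²+σ²), attained
by a two-point measure at x ∓ √((x−μ)²+σ²). -/
theorem scarf_sup_abs_large_x (μ σ x : ℝ) (hμ : 0 < μ) (hσ : 0 < σ)
    (hx : (μ ^ 2 + σ ^ 2) / (2 * μ) ≤ x) :
    (∀ Q : Measure ℝ, IsProbabilityMeasure Q → Q (Set.Ici (0:ℝ))ᶜ = 0 →
      Integrable id Q → Integrable (fun t => t ^ 2) Q →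
      (∫ t, t ∂Q) = μ → (∫ t, t ^ 2 ∂Q) = μ ^ 2 + σ ^ 2 →
      (∫ t, |x - t| ∂Q) ≤ Real.sqrt ((x - μ) ^ 2 + σ ^ 2)) ∧
    (let F := Real.sqrt ((x - μ) ^ 2 + σ ^ 2)
     let Qs := twoPoint (σ ^ 2 / (σ ^ 2 + (x - F - μ) ^ 2)) (x - F) (x + F)
     IsProbabilityMeasure Qs ∧ Qs (Set.Ici (0:ℝ))ᶜ = 0 ∧
     Integrable id Qs ∧ Integrable (fun t => t ^ 2) Qs ∧
     (∫ t, t ∂Qs) = μ ∧ (∫ t, t ^ 2 ∂Qs) = μ ^ 2 + σ ^ 2 ∧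
     (∫ t, |x - t| ∂Qs) = F) := by
  set F := Real.sqrt ((x - μ) ^ 2 + σ ^ 2) with hFdef
  have hargpos : 0 < (x - μ) ^ 2 + σ ^ 2 := by positivity
  have hF2 : F ^ 2 = (x - μ) ^ 2 + σ ^ 2 := Real.sq_sqrt hargpos.le
  have hFpos : 0 < F := Real.sqrt_pos.mpr hargpos
  have hFne : F ≠ 0 := hFpos.ne'
  have hu1 : x - μ < F := by nlinarith [sq_nonneg (F - (x - μ)), sq_nonneg (F + (x - μ))]
  have hu2 : -F < x - μ := by nlinarith [sq_nonneg (F - (x - μ)), sq_nonneg (F + (x - μ))]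
  have hxpos : 0 < x := lt_of_lt_of_le (by positivity) hx
  have hxF : F ≤ x := by
    have h1 : (x - μ) ^ 2 + σ ^ 2 ≤ x ^ 2 := by
      have := (div_le_iff₀ (by positivity : (0:ℝ) < 2 * μ)).mp hx
      nlinarith
    calc F ≤ Real.sqrt (x ^ 2) := Real.sqrt_le_sqrt h1
      _ = x := Real.sqrt_sq hxpos.le
  constructor
  · intro Q hQ _ hi1 hi2 hm1 hm2
    have hi1' : Integrable (fun t : ℝ => t) Q := hi1
    have hint_abs : Integrable (fun t => |x - t|) Q := ((integrable_const x).sub hi1).abs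
    have hintA : Integrable (fun t => x ^ 2 + F ^ 2 + (-(2 * x)) * t + t ^ 2) Q :=
      ((integrable_const _).add (hi1'.const_mul _)).add hi2
    have hint_q : Integrable (fun t => ((x - t) ^ 2 + F ^ 2) / (2 * F)) Q :=
      (hintA.div_const (2 * F)).congr (by filter_upwards with t; ring)
    have hle : (∫ t, |x - t| ∂Q) ≤ ∫ t, ((x - t) ^ 2 + F ^ 2) / (2 * F) ∂Q := by
      refine integral_mono hint_abs hint_q fun t => ?_
      rw [le_div_iff₀ (by positivity : (0:ℝ) < 2 * F)]
      nlinarith [sq_abs (x - t), sq_nonneg (|x - t| - F)]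
    have hval : (∫ t, ((x - t) ^ 2 + F ^ 2) / (2 * F) ∂Q) = F := by
      have e : (fun t => ((x - t) ^ 2 + F ^ 2) / (2 * F)) =
          (fun t => (x ^ 2 + F ^ 2 + (-(2 * x)) * t + t ^ 2) / (2 * F)) := by
        funext t; ring
      have hintC : Integrable (fun _ : ℝ => x ^ 2 + F ^ 2) Q := integrable_const _
      have hintL : Integrable (fun t : ℝ => (-(2 * x)) * t) Q := hi1'.const_mul _
      have hintCL : Integrable (fun t : ℝ => x ^ 2 + F ^ 2 + (-(2 * x)) * t) Q :=
        hintC.add hintL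
      rw [e, integral_div, integral_add hintCL hi2, integral_add hintC hintL,
        integral_const, integral_const_mul]
      have hQU : Q.real Set.univ = 1 := by simp [hQ.measure_univ]
      have hm1' : (∫ t, t ∂Q) = μ := hm1
      rw [hm2, hQU, hm1', one_smul]
      field_simp
      nlinarith [hF2]
    calc (∫ t, |x - t| ∂Q) ≤ _ := hle
      _ = F := hval
  · set p := σ ^ 2 / (σ ^ 2 + (x - F - μ) ^ 2) with hpdef
    have hdenpos : 0 < σ ^ 2 + (x - F - μ) ^ 2 := by positivity
    have hp : p = (F + (x - μ)) / (2 * F) := by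
      rw [hpdef, div_eq_div_iff hdenpos.ne' (by positivity)]
      nlinarith [hF2]
    have hp0 : 0 ≤ p := by positivity
    have hp1 : p ≤ 1 := by
      rw [hp, div_le_one (by positivity)]; linarith
    have hprob : IsProbabilityMeasure (twoPoint p (x - F) (x + F)) := by
      constructor
      simp only [twoPoint, Measure.add_apply, Measure.smul_apply, smul_eq_mul,
        Measure.dirac_apply_of_mem (Set.mem_univ _), mul_one]
      rw [← ENNReal.ofReal_add hp0 (by linarith), show p + (1 - p) = 1 by ring]
      simp
    refine ⟨hprob, ?_, integrable_twoPoint _ _ _ _ measurable_id,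
      integrable_twoPoint _ _ _ _ (by fun_prop), ?_, ?_, ?_⟩
    · have hmeas : MeasurableSet ((Set.Ici (0:ℝ))ᶜ) := measurableSet_Ici.compl
      simp only [twoPoint, Measure.add_apply, Measure.smul_apply, smul_eq_mul]
      rw [Measure.dirac_apply' _ hmeas, Measure.dirac_apply' _ hmeas]
      have h1 : (x - F) ∉ (Set.Ici (0:ℝ))ᶜ := by
        simp [Set.mem_Ici]; linarith
      have h2 : (x + F) ∉ (Set.Ici (0:ℝ))ᶜ := by
        simp [Set.mem_Ici]; linarith
      rw [Set.indicator_of_notMem h1, Set.indicator_of_notMem h2]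
      simp
    · have := integral_twoPoint p (x - F) (x + F) hp0 hp1 (fun t => t) measurable_id
      rw [show (∫ t, t ∂twoPoint p (x - F) (x + F)) =
        p * (x - F) + (1 - p) * (x + F) from this, hp]
      field_simp; ring
    · have := integral_twoPoint p (x - F) (x + F) hp0 hp1 (fun t => t ^ 2) (by fun_prop)
      rw [this, hp]
      field_simp
      linear_combination (2 * F) * hF2
    · have := integral_twoPoint p (x - F) (x + F) hp0 hp1 (fun t => |x - t|)
        (by fun_prop)
      rw [this]
      have e1 : x - (x - F) = F := by ring
      have e2 : x - (x + F) = -F := by ring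
      simp only [e1, e2, abs_neg, abs_of_pos hFpos]
      ring
end

section
/- Scarf's theorem, case (i): if b > c, c+h > 0, μ > 0, σ > 0 and σ²/μ² > (b−c)/(h+c), then the unique minimizer over x ∈ ℝ of ψ(x) = sup_{Q ∈ M} E_Q[c·x + b·(D−x)₊ + h·(x−D)₊] is x = 0, with optimal value b·μ, where M is the set of probability measures on ℝ₊ with mean μ and second moment μ²+σ². -/
open MeasureTheory Set

/-- Membership in the moment family: probability measures on ℝ₊ with mean μ
and second moment μ²+σ². -/
def inMomentFamily (μ σ : ℝ) (Q : MeasureTheory.Measure ℝ) : Prop :=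
  MeasureTheory.IsProbabilityMeasure Q ∧ Q (Set.Ici (0:ℝ))ᶜ = 0 ∧
    MeasureTheory.Integrable id Q ∧ MeasureTheory.Integrable (fun t => t ^ 2) Q ∧
    (∫ t, t ∂Q) = μ ∧ (∫ t, t ^ 2 ∂Q) = μ ^ 2 + σ ^ 2

/-- Scarf's worst-case cost ψ(x). -/
noncomputable def scarfPsi (c b h μ σ : ℝ) (x : ℝ) : ℝ :=
  sSup ((fun Q : MeasureTheory.Measure ℝ =>
    ∫ d, c * x + b * max (d - x) 0 + h * max (x - d) 0 ∂Q) ''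
      {Q | inMomentFamily μ σ Q})

lemma scarf_integrable_dirac (f : ℝ → ℝ) (a : ℝ) : Integrable f (Measure.dirac a) :=
  (integrable_congr (ae_eq_dirac f)).mpr (integrable_const _)

lemma scarf_Q0_integrable (p a : ℝ) (f : ℝ → ℝ) :
    Integrable f ((ENNReal.ofReal p) • Measure.dirac a
      + (ENNReal.ofReal (1 - p)) • Measure.dirac 0) :=
  ((scarf_integrable_dirac f a).smul_measure ENNReal.ofReal_ne_top).add_measure
    ((scarf_integrable_dirac f 0).smul_measure ENNReal.ofReal_ne_top)

lemma scarf_Q0_integral (p a : ℝ) (hp0 : 0 ≤ p) (hp1 : p ≤ 1) (f : ℝ → ℝ) :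
    ∫ t, f t ∂((ENNReal.ofReal p) • Measure.dirac a
      + (ENNReal.ofReal (1 - p)) • Measure.dirac 0)
      = p * f a + (1 - p) * f 0 := by
  rw [integral_add_measure
      ((scarf_integrable_dirac f a).smul_measure ENNReal.ofReal_ne_top)
      ((scarf_integrable_dirac f 0).smul_measure ENNReal.ofReal_ne_top),
    integral_smul_measure, integral_smul_measure, integral_dirac, integral_dirac,
    ENNReal.toReal_ofReal hp0, ENNReal.toReal_ofReal (by linarith)]
  simp [smul_eq_mul]

set_option maxHeartbeats 1600000 in
/-- Scarf's theorem, case (i): if σ²/μ² > (b−c)/(h+c) then x = 0 is the unique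
minimizer of ψ over ℝ, with optimal value bμ. -/
theorem scarf_case_i (b c h μ σ : ℝ) (hbc : c < b) (hch : 0 < c + h)
    (hμ : 0 < μ) (hσ : 0 < σ) (hvar : σ ^ 2 / μ ^ 2 > (b - c) / (h + c)) :
    scarfPsi c b h μ σ 0 = b * μ ∧
    ∀ x : ℝ, x ≠ 0 → scarfPsi c b h μ σ 0 < scarfPsi c b h μ σ x := by
  have hs : (0:ℝ) < μ ^ 2 + σ ^ 2 := by positivity
  have hμ2 : (0:ℝ) < μ ^ 2 := by positivity
  set p : ℝ := μ ^ 2 / (μ ^ 2 + σ ^ 2) with hp_def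
  set a : ℝ := (μ ^ 2 + σ ^ 2) / μ with ha_def
  have hp0 : 0 < p := by positivity
  have hp1 : p < 1 := by
    rw [hp_def, div_lt_one hs]; nlinarith
  have ha : 0 < a := by positivity
  have hpa : p * a = μ := by
    rw [hp_def, ha_def, div_mul_div_comm, div_eq_iff (by positivity)]; ring
  have hpa2 : p * a ^ 2 = μ ^ 2 + σ ^ 2 := by
    rw [hp_def, ha_def, div_pow, div_mul_div_comm, div_eq_iff (by positivity)]; ring
  -- key inequality from the variance condition
  have hvar' : (b - c) * μ ^ 2 < σ ^ 2 * (c + h) := by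
    rw [gt_iff_lt, div_lt_div_iff₀ (by linarith) hμ2] at hvar
    nlinarith
  have hkey : p * (b + h) < c + h := by
    rw [hp_def, div_mul_eq_mul_div, div_lt_iff₀ hs]; nlinarith
  have hkey2 : (b + h) * μ < (c + h) * a := by
    rw [ha_def, ← mul_div_assoc, lt_div_iff₀ hμ]; nlinarith
  clear_value p a
  -- the key pointwise inequality
  have hVnum : ∀ x : ℝ, x ≠ 0 →
      b * μ < p * (c * x + b * max (a - x) 0 + h * max (x - a) 0)
        + (1 - p) * (c * x + b * max (0 - x) 0 + h * max (x - 0) 0) := by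
    intro x hx
    rcases lt_trichotomy x 0 with hx0 | hx0 | hx0
    · rw [zero_sub, sub_zero, max_eq_left (by linarith : (0:ℝ) ≤ -x),
        max_eq_right hx0.le, max_eq_left (by linarith), max_eq_right (by linarith)]
      have hb : b * (p * a) = b * μ := by rw [hpa]
      nlinarith [hb, mul_pos (sub_pos.mpr hbc) (neg_pos.mpr hx0)]
    · exact absurd hx0 hx
    · rw [zero_sub, sub_zero, max_eq_right (by linarith : -x ≤ (0:ℝ)),
        max_eq_left hx0.le]
      rcases le_or_gt x a with hxa | hxa
      · rw [max_eq_left (by linarith), max_eq_right (by linarith)]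
        have hb : b * (p * a) = b * μ := by rw [hpa]
        nlinarith [hb, mul_pos hx0 (sub_pos.mpr hkey)]
      · rw [max_eq_right (by linarith), max_eq_left (by linarith)]
        have hb : h * (p * a) = h * μ := by rw [hpa]
        nlinarith [hb, hkey2, mul_lt_mul_of_pos_left hxa hch]
  -- the extremal two-point measure
  set Q0 : Measure ℝ := (ENNReal.ofReal p) • Measure.dirac a
      + (ENNReal.ofReal (1 - p)) • Measure.dirac 0 with hQ0_def
  have hQ0mem : inMomentFamily μ σ Q0 := by
    refine ⟨⟨?_⟩, ?_, scarf_Q0_integrable p a id, scarf_Q0_integrable p a _, ?_, ?_⟩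
    · rw [hQ0_def]
      simp only [Measure.add_apply, Measure.smul_apply, measure_univ, smul_eq_mul, mul_one]
      rw [← ENNReal.ofReal_add hp0.le (by linarith)]
      norm_num
    · rw [hQ0_def]
      simp only [Measure.add_apply, Measure.smul_apply,
        Measure.dirac_apply' _ measurableSet_Ici.compl]
      rw [Set.indicator_of_notMem (by simp [ha.le]), Set.indicator_of_notMem (by simp)]
      simp
    · rw [hQ0_def, scarf_Q0_integral p a hp0.le hp1.le]
      simpa using hpa
    · rw [hQ0_def, scarf_Q0_integral p a hp0.le hp1.le]
      simpa using hpa2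
  -- every Q in the family has a.e. nonnegative support
  have hae : ∀ Q : Measure ℝ, inMomentFamily μ σ Q → ∀ᵐ d ∂Q, 0 ≤ d := by
    intro Q hQ
    have : {d : ℝ | ¬ 0 ≤ d} = (Set.Ici (0:ℝ))ᶜ := by ext d; simp
    rw [MeasureTheory.ae_iff, this]
    exact hQ.2.1
  -- value of the integral at x = 0 for any member: b * μ
  have hval0 : ∀ Q : Measure ℝ, inMomentFamily μ σ Q →
      (∫ d, c * 0 + b * max (d - 0) 0 + h * max (0 - d) 0 ∂Q) = b * μ := by
    intro Q hQ
    haveI : IsProbabilityMeasure Q := hQ.1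
    have hcongr : (fun d : ℝ => c * 0 + b * max (d - 0) 0 + h * max (0 - d) 0)
        =ᵐ[Q] fun d => b * d := by
      filter_upwards [hae Q hQ] with d hd
      rw [sub_zero, zero_sub, max_eq_left hd, max_eq_right (neg_nonpos.mpr hd)]
      ring
    rw [integral_congr_ae hcongr, integral_const_mul]
    have := hQ.2.2.2.2.1
    rw [this]
  -- integrability of the cost function
  have hintΨ : ∀ (x : ℝ) (Q : Measure ℝ), inMomentFamily μ σ Q →
      Integrable (fun d => c * x + b * max (d - x) 0 + h * max (x - d) 0) Q := by
    intro x Q hQ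
    haveI : IsProbabilityMeasure Q := hQ.1
    have hid : Integrable (fun d : ℝ => d) Q := hQ.2.2.1
    have h1 : Integrable (fun d : ℝ => max (d - x) 0) Q :=
      (hid.sub (integrable_const x)).pos_part
    have h2 : Integrable (fun d : ℝ => max (x - d) 0) Q :=
      ((integrable_const x).sub hid).pos_part
    exact ((integrable_const (c * x)).add (h1.const_mul b)).add (h2.const_mul h)
  -- uniform upper bound for the values, giving BddAbove
  have hbdd : ∀ x : ℝ, ∀ Q : Measure ℝ, inMomentFamily μ σ Q →
      (∫ d, c * x + b * max (d - x) 0 + h * max (x - d) 0 ∂Q)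
        ≤ |b| * μ + (c * x + |b| * |x| + |h| * |x|) := by
    intro x Q hQ
    haveI hprob : IsProbabilityMeasure Q := hQ.1
    have hid : Integrable (fun d : ℝ => d) Q := hQ.2.2.1
    have hintg : Integrable (fun d : ℝ => |b| * d + (c * x + |b| * |x| + |h| * |x|)) Q :=
      (hid.const_mul |b|).add (integrable_const _)
    have hle : (fun d : ℝ => c * x + b * max (d - x) 0 + h * max (x - d) 0)
        ≤ᵐ[Q] fun d => |b| * d + (c * x + |b| * |x| + |h| * |x|) := by
      filter_upwards [hae Q hQ] with d hd
      have hm1 : max (d - x) 0 ≤ d + |x| :=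
        max_le (by linarith [neg_abs_le x]) (by positivity)
      have hm2 : max (x - d) 0 ≤ |x| := max_le (by linarith [le_abs_self x]) (abs_nonneg x)
      have hm1' : (0:ℝ) ≤ max (d - x) 0 := le_max_right _ _
      have hm2' : (0:ℝ) ≤ max (x - d) 0 := le_max_right _ _
      have hb1 : b * max (d - x) 0 ≤ |b| * (d + |x|) :=
        le_trans (mul_le_mul_of_nonneg_right (le_abs_self b) hm1')
          (mul_le_mul_of_nonneg_left hm1 (abs_nonneg b))
      have hb2 : h * max (x - d) 0 ≤ |h| * |x| :=
        le_trans (mul_le_mul_of_nonneg_right (le_abs_self h) hm2')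
          (mul_le_mul_of_nonneg_left hm2 (abs_nonneg h))
      nlinarith
    calc (∫ d, c * x + b * max (d - x) 0 + h * max (x - d) 0 ∂Q)
        ≤ ∫ d, |b| * d + (c * x + |b| * |x| + |h| * |x|) ∂Q :=
          integral_mono_ae (hintΨ x Q hQ) hintg hle
      _ = |b| * μ + (c * x + |b| * |x| + |h| * |x|) := by
          rw [integral_add (hid.const_mul |b|) (integrable_const _), integral_const_mul,
            integral_const]
          have := hQ.2.2.2.2.1
          rw [this]
          simp [measure_univ]
  have hBdd : ∀ x : ℝ, BddAbove ((fun Q : Measure ℝ =>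
      ∫ d, c * x + b * max (d - x) 0 + h * max (x - d) 0 ∂Q) '' {Q | inMomentFamily μ σ Q}) := by
    intro x
    refine ⟨|b| * μ + (c * x + |b| * |x| + |h| * |x|), ?_⟩
    rintro v ⟨Q, hQ, rfl⟩
    exact hbdd x Q hQ
  -- value of ψ at 0
  have hpsi0 : scarfPsi c b h μ σ 0 = b * μ := by
    have himg : ((fun Q : Measure ℝ =>
        ∫ d, c * 0 + b * max (d - 0) 0 + h * max (0 - d) 0 ∂Q) '' {Q | inMomentFamily μ σ Q})
        = {b * μ} := by
      apply Set.Subset.antisymm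
      · rintro v ⟨Q, hQ, rfl⟩
        exact hval0 Q hQ
      · rintro v hv
        rw [Set.mem_singleton_iff] at hv
        exact ⟨Q0, hQ0mem, hv ▸ hval0 Q0 hQ0mem⟩
    rw [scarfPsi, himg, csSup_singleton]
  refine ⟨hpsi0, ?_⟩
  intro x hx
  rw [hpsi0]
  -- value of the extremal measure at x
  have hVQ0 : (∫ d, c * x + b * max (d - x) 0 + h * max (x - d) 0 ∂Q0)
      = p * (c * x + b * max (a - x) 0 + h * max (x - a) 0)
        + (1 - p) * (c * x + b * max (0 - x) 0 + h * max (x - 0) 0) := by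
    rw [hQ0_def]
    exact scarf_Q0_integral p a hp0.le hp1.le _
  have hV : b * μ < ∫ d, c * x + b * max (d - x) 0 + h * max (x - d) 0 ∂Q0 := by
    rw [hVQ0]
    exact hVnum x hx
  calc b * μ < ∫ d, c * x + b * max (d - x) 0 + h * max (x - d) 0 ∂Q0 := hV
    _ ≤ scarfPsi c b h μ σ x := by
        rw [scarfPsi]
        exact le_csSup (hBdd x) (Set.mem_image_of_mem _ hQ0mem)
end

section
/- Uniqueness of degenerate minimizer under large variance: suppose b > c, c+h > 0, μ > 0, σ > 0, σ²/μ² > (b−c)/(h+c). For probability measures Q₁ on ℝ and Q₂ on ℝ₊ with E_{Q₂}[D₂]=μ, E_{Q₂}[D₂²]=μ²+σ², define φ(Q₁) = sup_{Q₂} E_{Q₁×Q₂}[c·D₁ + b·(D₂−D₁)₊ + h·(D₁−D₂)₊] (D₁, D₂ independent). Then the Dirac measure δ₀ at 0 is the unique minimizer of φ over all probability measures Q₁ on ℝ, with value b·μ. -/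
open MeasureTheory Set

lemma my_prod_smul_right (μ ν : Measure ℝ) [SFinite ν] (cE : ENNReal) (hc : cE ≠ ⊤) :
    μ.prod (cE • ν) = cE • μ.prod ν := by
  ext s hs
  rw [Measure.prod_apply hs, Measure.smul_apply, Measure.prod_apply hs]
  simp_rw [Measure.smul_apply, smul_eq_mul]
  rw [lintegral_const_mul' _ _ hc]

lemma my_integrable_dirac {f : ℝ → ℝ} (hf : StronglyMeasurable f) (a : ℝ) :
    Integrable f (Measure.dirac a) := by
  refine ⟨hf.aestronglyMeasurable, ?_⟩
  rw [HasFiniteIntegral]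
  rw [lintegral_dirac]
  exact ENNReal.coe_lt_top

noncomputable def Qstar (μ σ : ℝ) : Measure ℝ :=
  ENNReal.ofReal (μ^2/(μ^2+σ^2)) • Measure.dirac ((μ^2+σ^2)/μ)
    + ENNReal.ofReal (1 - μ^2/(μ^2+σ^2)) • Measure.dirac 0

lemma Qstar_mem (μ σ : ℝ) (hμ : 0 < μ) (hσ : 0 < σ) : inMomentFamily μ σ (Qstar μ σ) := by
  have hs2 : (0:ℝ) < μ^2 + σ^2 := by positivity
  set pt : ℝ := μ^2/(μ^2+σ^2) with hptdef
  set a : ℝ := (μ^2+σ^2)/μ with hadef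
  have hpt0 : 0 < pt := by positivity
  have hpt1 : pt < 1 := by
    rw [hptdef, div_lt_one hs2]; nlinarith
  have ha : 0 < a := by positivity
  have hpta : pt * a = μ := by rw [hptdef, hadef]; field_simp
  have hpta2 : pt * a^2 = μ^2 + σ^2 := by rw [hptdef, hadef]; field_simp
  have hint : ∀ (f : ℝ → ℝ), StronglyMeasurable f → Integrable f (Qstar μ σ) := by
    intro f hf
    exact ((my_integrable_dirac hf a).smul_measure ENNReal.ofReal_ne_top).add_measure
      ((my_integrable_dirac hf 0).smul_measure ENNReal.ofReal_ne_top)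
  have hintegral : ∀ (f : ℝ → ℝ), StronglyMeasurable f → ∫ t, f t ∂(Qstar μ σ) = pt * f a + (1-pt) * f 0 := by
    intro f hf
    rw [Qstar, integral_add_measure ((my_integrable_dirac hf a).smul_measure ENNReal.ofReal_ne_top)
        ((my_integrable_dirac hf 0).smul_measure ENNReal.ofReal_ne_top),
        integral_smul_measure, integral_smul_measure, integral_dirac, integral_dirac,
        ENNReal.toReal_ofReal hpt0.le, ENNReal.toReal_ofReal (by linarith)]
    simp only [smul_eq_mul]
    rfl
  refine ⟨⟨?_⟩, ?_, hint id stronglyMeasurable_id, hint _ (by measurability), ?_, ?_⟩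
  · rw [Qstar]
    simp only [Measure.add_apply, Measure.smul_apply, smul_eq_mul, measure_univ, mul_one]
    rw [← ENNReal.ofReal_add hpt0.le (by linarith), add_sub_cancel, ENNReal.ofReal_one]
  · rw [Qstar]
    have hmeas : MeasurableSet (Set.Ici (0:ℝ))ᶜ := measurableSet_Ici.compl
    simp only [Measure.add_apply, Measure.smul_apply, smul_eq_mul]
    rw [Measure.dirac_apply' _ hmeas, Measure.dirac_apply' _ hmeas]
    rw [Set.indicator_of_notMem (by simp [ha.le]; positivity), Set.indicator_of_notMem (by simp)]
    simp
  · rw [show (∫ t, t ∂(Qstar μ σ)) = ∫ t, id t ∂(Qstar μ σ) from rfl,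
      hintegral id stronglyMeasurable_id]
    simp only [id]
    linarith [hpta]
  · rw [hintegral _ (by measurability)]
    rw [← hpta2]; ring

lemma ae_nonneg_of_family {Q₂ : Measure ℝ} (h0 : Q₂ (Set.Ici (0:ℝ))ᶜ = 0) :
    ∀ᵐ y ∂Q₂, 0 ≤ y := by
  rw [ae_iff, show {y : ℝ | ¬ 0 ≤ y} = (Set.Ici (0:ℝ))ᶜ by ext y; simp]
  exact h0

lemma value_dirac0 (c b h μ σ : ℝ) (Q₂ : Measure ℝ) (hQ : inMomentFamily μ σ Q₂) :
    ∫ p : ℝ × ℝ,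
      (c * p.1 + b * max (p.2 - p.1) 0 + h * max (p.1 - p.2) 0)
        ∂((Measure.dirac (0:ℝ)).prod Q₂) = b * μ := by
  obtain ⟨hP, h0, hi1, hi2, hm1, hm2⟩ := hQ
  have hcont : Continuous (fun p : ℝ × ℝ => c * p.1 + b * max (p.2 - p.1) 0 + h * max (p.1 - p.2) 0) := by
    fun_prop
  rw [Measure.dirac_prod, integral_map measurable_prodMk_left.aemeasurable
    hcont.aestronglyMeasurable]
  have : ∫ y, (c * ((0:ℝ), y).1 + b * max (((0:ℝ), y).2 - ((0:ℝ), y).1) 0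
      + h * max (((0:ℝ), y).1 - ((0:ℝ), y).2) 0) ∂Q₂ = ∫ y, b * y ∂Q₂ := by
    apply integral_congr_ae
    filter_upwards [ae_nonneg_of_family h0] with y hy
    show c * 0 + b * max (y - 0) 0 + h * max (0 - y) 0 = b * y
    rw [max_eq_left (by linarith), max_eq_right (by linarith)]
    ring
  rw [this, integral_const_mul]
  rw [show (∫ y, y ∂Q₂) = ∫ y, id y ∂Q₂ from rfl] at hm1 ⊢
  rw [hm1]

lemma eq_dirac_of_compl_null (Q : Measure ℝ) [IsProbabilityMeasure Q]
    (h : Q ({(0:ℝ)}ᶜ) = 0) : Q = Measure.dirac 0 := by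
  have h0 : Q {(0:ℝ)} = 1 := by
    have := measure_add_measure_compl (μ := Q) (measurableSet_singleton (0:ℝ))
    rw [h, add_zero] at this
    rw [this, measure_univ]
  ext s hs
  rw [Measure.dirac_apply' _ hs]
  by_cases h0s : (0:ℝ) ∈ s
  · rw [Set.indicator_of_mem h0s, Pi.one_apply]
    refine le_antisymm (by rw [← measure_univ (μ := Q)]; exact measure_mono (Set.subset_univ s)) ?_
    calc (1 : ENNReal) = Q {0} := h0.symm
      _ ≤ Q s := measure_mono (Set.singleton_subset_iff.mpr h0s)
  · rw [Set.indicator_of_notMem h0s]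
    have : s ⊆ {(0:ℝ)}ᶜ := fun x hx => by
      simp only [Set.mem_compl_iff, Set.mem_singleton_iff]
      rintro rfl; exact h0s hx
    exact le_antisymm (le_trans (measure_mono this) h.le) zero_le

lemma section_integrable (c b h y : ℝ) {Q₁ : Measure ℝ} [IsProbabilityMeasure Q₁]
    (hI : Integrable id Q₁) :
    Integrable (fun x => c * x + b * max (y - x) 0 + h * max (x - y) 0) Q₁ := by
  have h1 : Integrable (fun x : ℝ => c * x) Q₁ := hI.const_mul c
  have h2 : Integrable (fun x : ℝ => max (y - x) 0) Q₁ := ((integrable_const y).sub hI).pos_part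
  have h3 : Integrable (fun x : ℝ => max (x - y) 0) Q₁ := (hI.sub (integrable_const y)).pos_part
  exact (h1.add (h2.const_mul b)).add (h3.const_mul h)

lemma pointwise_g (b c h μ pt a x : ℝ) (hbc : c < b) (hch : 0 < c + h)
    (ha : 0 < a) (hpta : pt * a = μ) (hslope : 0 < c + h - pt * (b + h)) :
    b * μ ≤ pt * (c * x + b * max (a - x) 0 + h * max (x - a) 0)
        + (1 - pt) * (c * x + b * max (0 - x) 0 + h * max (x - 0) 0)
    ∧ (x ≠ 0 → b * μ < pt * (c * x + b * max (a - x) 0 + h * max (x - a) 0)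
        + (1 - pt) * (c * x + b * max (0 - x) 0 + h * max (x - 0) 0)) := by
  rcases le_or_gt x 0 with hx | hx
  · rw [max_eq_left (by linarith), max_eq_right (by linarith),
      max_eq_left (by linarith), max_eq_right (by linarith)]
    have key : pt * (c * x + b * (a - x) + h * 0) + (1 - pt) * (c * x + b * (0 - x) + h * 0)
        = b * μ + (b - c) * (-x) := by rw [← hpta]; ring
    rw [key]
    constructor
    · nlinarith
    · intro hne
      have hxneg : x < 0 := lt_of_le_of_ne hx hne
      nlinarith [mul_pos (sub_pos.mpr hbc) (neg_pos.mpr hxneg)]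
  · rcases le_or_gt x a with hxa | hxa
    · rw [max_eq_left (by linarith), max_eq_right (by linarith),
        max_eq_right (by linarith), max_eq_left (by linarith)]
      have key : pt * (c * x + b * (a - x) + h * 0) + (1 - pt) * (c * x + b * 0 + h * (x - 0))
          = b * μ + (c + h - pt * (b + h)) * x := by rw [← hpta]; ring
      rw [key]
      have : 0 < (c + h - pt * (b + h)) * x := mul_pos hslope hx
      exact ⟨by linarith, fun _ => by linarith⟩
    · rw [max_eq_right (by linarith), max_eq_left (by linarith),
        max_eq_right (by linarith), max_eq_left (by linarith)]
      have key : pt * (c * x + b * 0 + h * (x - a)) + (1 - pt) * (c * x + b * 0 + h * (x - 0))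
          = b * μ + (c + h - pt * (b + h)) * a + (c + h) * (x - a) := by rw [← hpta]; ring
      rw [key]
      have h1 : 0 < (c + h - pt * (b + h)) * a := mul_pos hslope ha
      have h2 : 0 < (c + h) * (x - a) := mul_pos hch (by linarith)
      exact ⟨by linarith, fun _ => by linarith⟩

lemma integral_prod_qstar (c b h μ σ : ℝ) (hμ : 0 < μ) (hσ : 0 < σ) (Q₁ : Measure ℝ)
    [IsProbabilityMeasure Q₁] (hI : Integrable id Q₁) :
    ∫ p : ℝ × ℝ, (c * p.1 + b * max (p.2 - p.1) 0 + h * max (p.1 - p.2) 0)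
        ∂(Q₁.prod (Qstar μ σ))
      = (μ^2/(μ^2+σ^2)) *
          (∫ x, (c * x + b * max ((μ^2+σ^2)/μ - x) 0 + h * max (x - (μ^2+σ^2)/μ) 0) ∂Q₁)
        + (1 - μ^2/(μ^2+σ^2)) *
          (∫ x, (c * x + b * max (0 - x) 0 + h * max (x - 0) 0) ∂Q₁) := by
  have hs2 : (0:ℝ) < μ^2 + σ^2 := by positivity
  set pt : ℝ := μ^2/(μ^2+σ^2) with hptdef
  set a : ℝ := (μ^2+σ^2)/μ with hadef
  have hpt0 : 0 < pt := by positivity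
  have hpt1 : pt < 1 := by rw [hptdef, div_lt_one hs2]; nlinarith
  have hcont : Continuous (fun p : ℝ × ℝ =>
      c * p.1 + b * max (p.2 - p.1) 0 + h * max (p.1 - p.2) 0) := by fun_prop
  have hm1 : Measurable (fun x : ℝ => (x, a)) := measurable_id.prodMk measurable_const
  have hm2 : Measurable (fun x : ℝ => (x, (0:ℝ))) := measurable_id.prodMk measurable_const
  have hprod : Q₁.prod (Qstar μ σ)
      = ENNReal.ofReal pt • Q₁.map (fun x => (x, a))
        + ENNReal.ofReal (1 - pt) • Q₁.map (fun x => (x, (0:ℝ))) := by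
    rw [Qstar, Measure.prod_add,
      my_prod_smul_right _ _ _ ENNReal.ofReal_ne_top,
      my_prod_smul_right _ _ _ ENNReal.ofReal_ne_top,
      Measure.prod_dirac, Measure.prod_dirac]
  have hia : Integrable (fun p : ℝ × ℝ =>
      c * p.1 + b * max (p.2 - p.1) 0 + h * max (p.1 - p.2) 0) (Q₁.map (fun x => (x, a))) := by
    refine (integrable_map_measure hcont.aestronglyMeasurable hm1.aemeasurable).mpr ?_
    exact section_integrable c b h a hI
  have hi0 : Integrable (fun p : ℝ × ℝ =>
      c * p.1 + b * max (p.2 - p.1) 0 + h * max (p.1 - p.2) 0) (Q₁.map (fun x => (x, (0:ℝ)))) := by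
    refine (integrable_map_measure hcont.aestronglyMeasurable hm2.aemeasurable).mpr ?_
    exact section_integrable c b h 0 hI
  rw [hprod, integral_add_measure (hia.smul_measure ENNReal.ofReal_ne_top)
      (hi0.smul_measure ENNReal.ofReal_ne_top),
    integral_smul_measure, integral_smul_measure,
    integral_map hm1.aemeasurable hcont.aestronglyMeasurable,
    integral_map hm2.aemeasurable hcont.aestronglyMeasurable,
    ENNReal.toReal_ofReal hpt0.le, ENNReal.toReal_ofReal (by linarith)]
  simp only [smul_eq_mul]

lemma phi_set_bddAbove (c b h μ σ : ℝ) (hμ : 0 < μ) (Q₁ : Measure ℝ)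
    [IsProbabilityMeasure Q₁] (hI : Integrable id Q₁) :
    BddAbove {r : ℝ | ∃ Q₂ : Measure ℝ, inMomentFamily μ σ Q₂ ∧
      r = ∫ p : ℝ × ℝ,
        (c * p.1 + b * max (p.2 - p.1) 0 + h * max (p.1 - p.2) 0) ∂(Q₁.prod Q₂)} := by
  have hM : (0:ℝ) ≤ ∫ x, |x| ∂Q₁ := integral_nonneg fun x => abs_nonneg x
  refine ⟨(|c|+|b|+|h|) * (∫ x, |x| ∂Q₁) + (|b|+|h|) * μ, ?_⟩
  rintro r ⟨Q₂, ⟨hP, h0, hi1, hi2, hm1, hm2⟩, rfl⟩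
  haveI := hP
  have habs : Continuous (fun t : ℝ => |t|) := continuous_abs
  by_cases hint : Integrable (fun p : ℝ × ℝ =>
      c * p.1 + b * max (p.2 - p.1) 0 + h * max (p.1 - p.2) 0) (Q₁.prod Q₂)
  · have hmapfst : (Q₁.prod Q₂).map Prod.fst = Q₁ := by
      rw [Measure.map_fst_prod, measure_univ, one_smul]
    have hmapsnd : (Q₁.prod Q₂).map Prod.snd = Q₂ := by
      rw [Measure.map_snd_prod, measure_univ, one_smul]
    have hF1 : Integrable (fun p : ℝ × ℝ => |p.1|) (Q₁.prod Q₂) := by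
      have := (integrable_map_measure habs.aestronglyMeasurable
        measurable_fst.aemeasurable).mp (by rw [hmapfst]; exact hI.abs)
      exact this
    have hF2 : Integrable (fun p : ℝ × ℝ => |p.2|) (Q₁.prod Q₂) := by
      have := (integrable_map_measure habs.aestronglyMeasurable
        measurable_snd.aemeasurable).mp (by rw [hmapsnd]; exact hi1.abs)
      exact this
    have hF : Integrable (fun p : ℝ × ℝ => (|c|+|b|+|h|) * |p.1| + (|b|+|h|) * |p.2|)
        (Q₁.prod Q₂) := (hF1.const_mul _).add (hF2.const_mul _)
    have hle : ∀ p : ℝ × ℝ,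
        c * p.1 + b * max (p.2 - p.1) 0 + h * max (p.1 - p.2) 0
          ≤ (|c|+|b|+|h|) * |p.1| + (|b|+|h|) * |p.2| := by
      intro ⟨x, y⟩
      simp only
      have h1 : c * x ≤ |c| * |x| := by rw [← abs_mul]; exact le_abs_self _
      have hm10 : (0:ℝ) ≤ max (y - x) 0 := le_max_right _ _
      have hm1le : max (y - x) 0 ≤ |x| + |y| :=
        max_le (by linarith [neg_abs_le x, le_abs_self y]) (by positivity)
      have hm20 : (0:ℝ) ≤ max (x - y) 0 := le_max_right _ _
      have hm2le : max (x - y) 0 ≤ |x| + |y| :=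
        max_le (by linarith [le_abs_self x, neg_abs_le y]) (by positivity)
      have h2 : b * max (y - x) 0 ≤ |b| * (|x| + |y|) :=
        le_trans (mul_le_mul_of_nonneg_right (le_abs_self b) hm10)
          (mul_le_mul_of_nonneg_left hm1le (abs_nonneg b))
      have h3 : h * max (x - y) 0 ≤ |h| * (|x| + |y|) :=
        le_trans (mul_le_mul_of_nonneg_right (le_abs_self h) hm20)
          (mul_le_mul_of_nonneg_left hm2le (abs_nonneg h))
      nlinarith [abs_nonneg x, abs_nonneg y]
    have hint2 : ∫ x, |x| ∂Q₂ = μ := by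
      rw [← hm1]
      apply integral_congr_ae
      filter_upwards [ae_nonneg_of_family h0] with y hy
      exact abs_of_nonneg hy
    calc ∫ p : ℝ × ℝ, (c * p.1 + b * max (p.2 - p.1) 0 + h * max (p.1 - p.2) 0)
          ∂(Q₁.prod Q₂)
        ≤ ∫ p : ℝ × ℝ, ((|c|+|b|+|h|) * |p.1| + (|b|+|h|) * |p.2|) ∂(Q₁.prod Q₂) :=
          integral_mono hint hF hle
      _ = (|c|+|b|+|h|) * (∫ p : ℝ × ℝ, |p.1| ∂(Q₁.prod Q₂))
          + (|b|+|h|) * (∫ p : ℝ × ℝ, |p.2| ∂(Q₁.prod Q₂)) := by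
          rw [integral_add (hF1.const_mul _) (hF2.const_mul _),
            integral_const_mul, integral_const_mul]
      _ = (|c|+|b|+|h|) * (∫ x, |x| ∂Q₁) + (|b|+|h|) * μ := by
          rw [show (∫ p : ℝ × ℝ, |p.1| ∂(Q₁.prod Q₂))
              = ∫ t, |t| ∂((Q₁.prod Q₂).map Prod.fst) from
            (integral_map measurable_fst.aemeasurable habs.aestronglyMeasurable).symm,
            show (∫ p : ℝ × ℝ, |p.2| ∂(Q₁.prod Q₂))
              = ∫ t, |t| ∂((Q₁.prod Q₂).map Prod.snd) from
            (integral_map measurable_snd.aemeasurable habs.aestronglyMeasurable).symm,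
            hmapfst, hmapsnd, hint2]
  · rw [integral_undef hint]
    have hb : (0:ℝ) ≤ |b| := abs_nonneg b
    have hh : (0:ℝ) ≤ |h| := abs_nonneg h
    have hc : (0:ℝ) ≤ |c| := abs_nonneg c
    nlinarith

/-- φ(Q₁) = sup_{Q₂ ∈ M} E_{Q₁×Q₂}[Ψ(D₁,D₂)]. -/
noncomputable def phiFun (c b h μ σ : ℝ) (Q₁ : MeasureTheory.Measure ℝ) : ℝ :=
  sSup {r : ℝ | ∃ Q₂ : MeasureTheory.Measure ℝ, inMomentFamily μ σ Q₂ ∧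
    r = ∫ p : ℝ × ℝ,
      (c * p.1 + b * max (p.2 - p.1) 0 + h * max (p.1 - p.2) 0) ∂(Q₁.prod Q₂)}

/-- Under the large-variance condition σ²/μ² > (b−c)/(h+c), the Dirac measure at 0
is the unique minimizer of φ over probability measures Q₁ on ℝ (with finite first
moment), with value bμ. -/
theorem dirac_zero_unique_minimizer (b c h μ σ : ℝ) (hbc : c < b) (hch : 0 < c + h)
    (hμ : 0 < μ) (hσ : 0 < σ) (hvar : σ ^ 2 / μ ^ 2 > (b - c) / (h + c)) :
    phiFun c b h μ σ (MeasureTheory.Measure.dirac 0) = b * μ ∧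
    ∀ Q₁ : MeasureTheory.Measure ℝ, MeasureTheory.IsProbabilityMeasure Q₁ →
      MeasureTheory.Integrable id Q₁ → Q₁ ≠ MeasureTheory.Measure.dirac 0 →
      b * μ < phiFun c b h μ σ Q₁ := by
  have hs2 : (0:ℝ) < μ^2 + σ^2 := by positivity
  set pt : ℝ := μ^2/(μ^2+σ^2) with hptdef
  set a : ℝ := (μ^2+σ^2)/μ with hadef
  have hpt0 : 0 < pt := by positivity
  have hpt1 : pt < 1 := by rw [hptdef, div_lt_one hs2]; nlinarith
  have ha : 0 < a := by positivity
  have hpta : pt * a = μ := by rw [hptdef, hadef]; field_simp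
  have hμ2 : (0:ℝ) < μ^2 := by positivity
  have hhc : (0:ℝ) < h + c := by linarith
  have h1 : (b - c) * μ^2 < σ^2 * (h + c) := (div_lt_div_iff₀ hhc hμ2).mp hvar
  have hslope : 0 < c + h - pt * (b + h) := by
    have hlt : pt * (b + h) < c + h := by
      rw [hptdef, div_mul_eq_mul_div, div_lt_iff₀ hs2]; nlinarith
    linarith
  constructor
  · rw [phiFun]
    have hset : {r : ℝ | ∃ Q₂ : Measure ℝ, inMomentFamily μ σ Q₂ ∧
        r = ∫ p : ℝ × ℝ, (c * p.1 + b * max (p.2 - p.1) 0 + h * max (p.1 - p.2) 0)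
          ∂((Measure.dirac (0:ℝ)).prod Q₂)} = {b * μ} := by
      ext r
      simp only [Set.mem_setOf_eq, Set.mem_singleton_iff]
      constructor
      · rintro ⟨Q₂, hQ, rfl⟩
        exact value_dirac0 c b h μ σ Q₂ hQ
      · rintro rfl
        exact ⟨Qstar μ σ, Qstar_mem μ σ hμ hσ,
          (value_dirac0 c b h μ σ _ (Qstar_mem μ σ hμ hσ)).symm⟩
    rw [hset, csSup_singleton]
  · intro Q₁ hP hI hne
    haveI := hP
    set G : ℝ → ℝ := fun x =>
      pt * (c * x + b * max (a - x) 0 + h * max (x - a) 0)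
        + (1 - pt) * (c * x + b * max (0 - x) 0 + h * max (x - 0) 0) with hGdef
    have hGint : Integrable G Q₁ :=
      ((section_integrable c b h a hI).const_mul pt).add
        ((section_integrable c b h 0 hI).const_mul (1 - pt))
    have hval : (∫ p : ℝ × ℝ, (c * p.1 + b * max (p.2 - p.1) 0 + h * max (p.1 - p.2) 0)
        ∂(Q₁.prod (Qstar μ σ))) = ∫ x, G x ∂Q₁ := by
      rw [integral_prod_qstar c b h μ σ hμ hσ Q₁ hI,
        ← integral_const_mul, ← integral_const_mul,
        ← integral_add ((section_integrable c b h a hI).const_mul pt)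
          ((section_integrable c b h 0 hI).const_mul (1 - pt))]
    have hne0 : Q₁ {(0:ℝ)}ᶜ ≠ 0 := fun hzero => hne (eq_dirac_of_compl_null Q₁ hzero)
    have hptw : ∀ x : ℝ, b * μ ≤ G x ∧ (x ≠ 0 → b * μ < G x) :=
      fun x => pointwise_g b c h μ pt a x hbc hch ha hpta hslope
    have hpos : 0 < ∫ x, (G x - b * μ) ∂Q₁ := by
      refine (integral_pos_iff_support_of_nonneg_ae ?_ ?_).mpr ?_
      · exact Filter.Eventually.of_forall fun x => sub_nonneg.mpr (hptw x).1
      · exact hGint.sub (integrable_const _)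
      · refine lt_of_lt_of_le ?_ (measure_mono (show {(0:ℝ)}ᶜ ⊆
            Function.support (fun x => G x - b * μ) from ?_))
        · exact pos_iff_ne_zero.mpr hne0
        · intro x hx
          have hx0 : x ≠ 0 := by simpa using hx
          exact fun hzero => absurd hzero (ne_of_gt (sub_pos.mpr ((hptw x).2 hx0)))
    have hGgt : b * μ < ∫ x, G x ∂Q₁ := by
      rw [integral_sub hGint (integrable_const _), integral_const, probReal_univ,
        one_smul] at hpos
      linarith
    rw [phiFun]
    refine lt_of_lt_of_le (hval ▸ hGgt) (le_csSup ?_ ?_)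
    · exact phi_set_bddAbove c b h μ σ hμ Q₁ hI
    · exact ⟨Qstar μ σ, Qstar_mem μ σ hμ hσ, rfl⟩
end
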